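/- Writing f = Σ a_k z^k/k! and g = Σ b_k z^k/k! (with a_k = f^{(k)}(0), b_k = g^{(k)}(0)), the ⋆-product satisfies (f ⋆ g)(z) = Σ_{k=0}^{n} (Σ_{j=0}^{n−k} a_{k+j} b_{n−j}) z^k/k!. -/

import Mathlib

open Polynomial

/-- `P n` is the space of complex polynomials of degree at most `n`. -/
noncomputable def Pn (n : ℕ) : Submodule ℂ (Polynomial ℂ) := Polynomial.degreeLT ℂ (n + 1)

noncomputable instance instPnEndAddCommGroup (n : ℕ) : AddCommGroup (Module.End ℂ (Pn n)) :=
  LinearMap.addCommGroup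

noncomputable instance instPnEndRing (n : ℕ) : Ring (Module.End ℂ (Pn n)) := Module.End.instRing

/-- The differentiation operator on `Pn n`. -/
noncomputable def Dop (n : ℕ) : Module.End ℂ (Pn n) :=
  (Polynomial.derivative (R := ℂ)).restrict (p := Pn n) (q := Pn n)
    (fun f hf => by
      simp only [Pn, Polynomial.mem_degreeLT] at *
      exact lt_of_le_of_lt (Polynomial.degree_derivative_le) hf)

/-- `calD n` is the span of `I, D, D^2, ..., D^n` in `L(Pn n)`. -/
noncomputable def calD (n : ℕ) : Submodule ℂ (Module.End ℂ (Pn n)) :=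
  Submodule.span ℂ (Set.range fun k : Fin (n + 1) => (Dop n) ^ (k : ℕ))

/-- `φ_k(z) = z^k / k!` as an element of `Pn n` (for `k ≤ n`). -/
noncomputable def phiP (n k : ℕ) (h : k ≤ n) : Pn n :=
  ⟨Polynomial.C (((Nat.factorial k : ℂ))⁻¹) * Polynomial.X ^ k, by
    rw [Pn, Polynomial.mem_degreeLT]
    exact lt_of_le_of_lt (Polynomial.degree_C_mul_X_pow_le _ _)
      (by exact_mod_cast Nat.lt_succ_of_le h)⟩

lemma iter_deriv_phi (k i : ℕ) :
    derivative^[i] (C ((Nat.factorial k : ℂ))⁻¹ * X ^ k) =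
      if i ≤ k then C ((Nat.factorial (k - i) : ℂ))⁻¹ * X ^ (k - i) else 0 := by
  induction i with
  | zero => simp
  | succ i ih =>
    rw [Function.iterate_succ_apply', ih]
    by_cases h : i + 1 ≤ k
    · have h' : i ≤ k := by omega
      rw [if_pos h', if_pos h, derivative_C_mul, derivative_X_pow]
      have hk : k - i = (k - (i + 1)) + 1 := by omega
      rw [hk, ← mul_assoc, ← C_mul]
      congr 2
      have h1 : ((k - (i+1) : ℕ) : ℂ) + 1 ≠ 0 := Nat.cast_add_one_ne_zero (k - (i+1))
      have heq : (((k - (i+1)) + 1).factorial : ℂ) =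
          (((k - (i+1) : ℕ) : ℂ) + 1) * ((k - (i+1)).factorial : ℂ) := by
        rw [Nat.factorial_succ]; push_cast; ring
      rw [heq, mul_inv]
      push_cast
      rw [mul_comm, ← mul_assoc, mul_inv_cancel₀ h1, one_mul]
    · by_cases h' : i ≤ k
      · have : i = k := by omega
        subst this
        simp [if_neg h]
      · rw [if_neg h', if_neg h]
        simp

lemma eval_iter_phi (k i : ℕ) :
    (derivative^[i] (C ((Nat.factorial k : ℂ))⁻¹ * X ^ k)).eval 0 =
      if i = k then 1 else 0 := by
  rw [iter_deriv_phi]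
  by_cases h : i ≤ k
  · rw [if_pos h]
    by_cases h' : i = k
    · subst h'
      simp
    · rw [if_neg h']
      have : k - i ≠ 0 := by omega
      simp [zero_pow this]
  · rw [if_neg h, if_neg (by omega : i ≠ k)]
    simp

lemma coe_Dop (n : ℕ) (p : Pn n) :
    ((Dop n p : Pn n) : Polynomial ℂ) = derivative (p : Polynomial ℂ) := rfl

lemma coe_Dop_pow (n i : ℕ) (p : Pn n) :
    (((Dop n ^ i) p : Pn n) : Polynomial ℂ) = derivative^[i] (p : Polynomial ℂ) := by
  induction i generalizing p with
  | zero => simp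
  | succ i ih =>
    rw [pow_succ', Module.End.mul_apply, coe_Dop, ih, Function.iterate_succ_apply']

lemma eval_rep (n : ℕ) (c : Fin (n + 1) → ℂ) (p : Polynomial ℂ)
    (h : p = ∑ i : Fin (n + 1),
        c i • (C ((Nat.factorial (n - (i : ℕ)) : ℂ))⁻¹ * X ^ (n - (i : ℕ))))
    (m : ℕ) (hm : m ≤ n) :
    (derivative^[m] p).eval 0 = c ⟨n - m, by omega⟩ := by
  subst h
  have step : derivative^[m] (∑ i : Fin (n+1),
        c i • (C ((Nat.factorial (n - (i:ℕ)) : ℂ))⁻¹ * X ^ (n - (i:ℕ)))) =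
      ∑ i : Fin (n+1), c i • derivative^[m]
        (C ((Nat.factorial (n - (i:ℕ)) : ℂ))⁻¹ * X ^ (n - (i:ℕ))) := by
    rw [← Module.End.pow_apply (Polynomial.derivative (R := ℂ)), map_sum]
    simp only [map_smul, Module.End.pow_apply]
  rw [step, eval_finset_sum]
  have step2 : ∀ i ∈ Finset.univ, (c i • derivative^[m]
      (C ((Nat.factorial (n - (i:ℕ)) : ℂ))⁻¹ * X ^ (n - (i:ℕ)))).eval 0 =
      if (⟨n - m, by omega⟩ : Fin (n+1)) = i then c i else 0 := by
    intro i _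
    rw [eval_smul, eval_iter_phi, smul_eq_mul]
    have hlt := i.isLt
    by_cases hi : (⟨n - m, by omega⟩ : Fin (n+1)) = i
    · have hv := congrArg Fin.val hi
      simp only at hv
      have : m = n - (i:ℕ) := by omega
      rw [if_pos this, if_pos hi, mul_one]
    · have : m ≠ n - (i:ℕ) := by
        intro hme
        exact hi (Fin.ext (by simp only; omega))
      rw [if_neg this, if_neg hi, mul_zero]
  rw [Finset.sum_congr rfl step2, Finset.sum_ite_eq]
  simp

lemma rep_poly (n : ℕ) (c : Fin (n + 1) → ℂ) (p : Pn n)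
    (h : (∑ i : Fin (n + 1), c i • Dop n ^ (i : ℕ)) (phiP n n le_rfl) = p) :
    (p : Polynomial ℂ) = ∑ i : Fin (n + 1),
        c i • (C ((Nat.factorial (n - (i : ℕ)) : ℂ))⁻¹ * X ^ (n - (i : ℕ))) := by
  rw [← h, LinearMap.sum_apply, AddSubmonoidClass.coe_finset_sum]
  refine Finset.sum_congr rfl fun i _ => ?_
  rw [LinearMap.smul_apply, SetLike.val_smul, coe_Dop_pow]
  have hphi : ((phiP n n le_rfl : Pn n) : Polynomial ℂ) =
      C ((Nat.factorial n : ℂ))⁻¹ * X ^ n := rfl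
  rw [hphi, iter_deriv_phi, if_pos (by have := i.isLt; omega : (i : ℕ) ≤ n)]


/-- Coordinate formula for the `⋆`-product: writing `f = Σ a_k z^k/k!`, `g = Σ b_k z^k/k!`
with `a_k = f^{(k)}(0)`, `b_k = g^{(k)}(0)`, one has
`(f ⋆ g)(z) = Σ_{k=0}^{n} (Σ_{j=0}^{n-k} a_{k+j} b_{n-j}) z^k/k!`.
Here `f ⋆ g = (F * G) φ_n` where `F, G ∈ 𝒟(P_n)` satisfy `Fφ_n = f`, `Gφ_n = g`. -/
theorem star_product_coordinates (n : ℕ) (hn : 0 < n)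
    (F G : Module.End ℂ (Pn n)) (hF : F ∈ calD n) (hG : G ∈ calD n)
    (f g : Pn n) (hFf : F (phiP n n le_rfl) = f) (hGg : G (phiP n n le_rfl) = g) :
    (((F * G) (phiP n n le_rfl) : Pn n) : Polynomial ℂ) =
      ∑ k ∈ Finset.range (n + 1),
        Polynomial.C ((∑ j ∈ Finset.range (n - k + 1),
            (Polynomial.derivative^[k + j] (f : Polynomial ℂ)).eval 0 *
            (Polynomial.derivative^[n - j] (g : Polynomial ℂ)).eval 0) *
          ((Nat.factorial k : ℂ))⁻¹) * Polynomial.X ^ k := by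
  rw [calD, Submodule.mem_span_range_iff_exists_fun] at hF hG
  obtain ⟨c, hc⟩ := hF
  obtain ⟨d, hd⟩ := hG
  have hfp := rep_poly n c f (by rw [hc, hFf])
  have hgp := rep_poly n d g (by rw [hd, hGg])
  have ha : ∀ m, m ≤ n → (derivative^[m] (f : Polynomial ℂ)).eval 0 = c ⟨n - m, by omega⟩ :=
    fun m hm => eval_rep n c _ hfp m hm
  have hb : ∀ m, m ≤ n → (derivative^[m] (g : Polynomial ℂ)).eval 0 = d ⟨n - m, by omega⟩ :=
    fun m hm => eval_rep n d _ hgp m hm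
  have hGphi : ((G (phiP n n le_rfl) : Pn n) : Polynomial ℂ) =
      ∑ j : Fin (n + 1), d j • (C ((Nat.factorial (n - (j : ℕ)) : ℂ))⁻¹ * X ^ (n - (j : ℕ))) :=
    rep_poly n d _ (by rw [hd])
  have hL : (((F * G) (phiP n n le_rfl) : Pn n) : Polynomial ℂ) =
      ∑ i : Fin (n + 1), ∑ j : Fin (n + 1), (c i * d j) •
        (if (i : ℕ) ≤ n - (j : ℕ) then
          C ((Nat.factorial (n - (j : ℕ) - (i : ℕ)) : ℂ))⁻¹ * X ^ (n - (j : ℕ) - (i : ℕ))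
        else 0) := by
    rw [Module.End.mul_apply, ← hc, LinearMap.sum_apply, AddSubmonoidClass.coe_finset_sum]
    refine Finset.sum_congr rfl fun i _ => ?_
    rw [LinearMap.smul_apply, SetLike.val_smul, coe_Dop_pow, hGphi]
    rw [← Module.End.pow_apply (Polynomial.derivative (R := ℂ)), map_sum, Finset.smul_sum]
    refine Finset.sum_congr rfl fun j _ => ?_
    rw [map_smul, Module.End.pow_apply, iter_deriv_phi, smul_smul]
  have hRHS : (∑ k ∈ Finset.range (n + 1),
        Polynomial.C ((∑ j ∈ Finset.range (n - k + 1),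
            (Polynomial.derivative^[k + j] (f : Polynomial ℂ)).eval 0 *
            (Polynomial.derivative^[n - j] (g : Polynomial ℂ)).eval 0) *
          ((Nat.factorial k : ℂ))⁻¹) * Polynomial.X ^ k) =
      ∑ k ∈ Finset.range (n + 1),
        C ((∑ j ∈ Finset.range (n - k + 1),
            c ⟨n - k - j, by omega⟩ * d ⟨n - (n - j), by omega⟩) *
          ((Nat.factorial k : ℂ))⁻¹) * X ^ k := by
    refine Finset.sum_congr rfl fun k hk => ?_
    rw [Finset.mem_range] at hk
    have hinner : (∑ j ∈ Finset.range (n - k + 1),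
        (derivative^[k + j] (f : Polynomial ℂ)).eval 0 *
        (derivative^[n - j] (g : Polynomial ℂ)).eval 0) =
        ∑ j ∈ Finset.range (n - k + 1),
          c ⟨n - k - j, by omega⟩ * d ⟨n - (n - j), by omega⟩ := by
      refine Finset.sum_congr rfl fun j hj => ?_
      rw [Finset.mem_range] at hj
      rw [ha (k + j) (by omega), hb (n - j) (by omega)]
      have : (⟨n - (k + j), by omega⟩ : Fin (n + 1)) = ⟨n - k - j, by omega⟩ :=
        Fin.mk_eq_mk.mpr (by omega)
      rw [this]
    rw [hinner]
  rw [hL, hRHS]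
  ext m
  rw [Polynomial.finset_sum_coeff, Polynomial.finset_sum_coeff]
  -- RHS coefficient
  have hrc : ∀ k ∈ Finset.range (n + 1),
      (C ((∑ j ∈ Finset.range (n - k + 1),
          c ⟨n - k - j, by omega⟩ * d ⟨n - (n - j), by omega⟩) *
        ((Nat.factorial k : ℂ))⁻¹) * X ^ k).coeff m =
      if m = k then (∑ j ∈ Finset.range (n - k + 1),
          c ⟨n - k - j, by omega⟩ * d ⟨n - (n - j), by omega⟩) *
        ((Nat.factorial k : ℂ))⁻¹ else 0 := by
    intro k _
    rw [Polynomial.coeff_C_mul, Polynomial.coeff_X_pow]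
    split_ifs <;> simp
  rw [Finset.sum_congr rfl hrc, Finset.sum_ite_eq]
  -- LHS coefficient, per-term
  have hlc : ∀ i : Fin (n + 1),
      (∑ j : Fin (n + 1), ((c i * d j) •
        (if (i : ℕ) ≤ n - (j : ℕ) then
          C ((Nat.factorial (n - (j : ℕ) - (i : ℕ)) : ℂ))⁻¹ * X ^ (n - (j : ℕ) - (i : ℕ))
        else 0))).coeff m =
      if hI : (i : ℕ) + m ≤ n then
        c i * d ⟨n - m - (i : ℕ), by omega⟩ * ((Nat.factorial m : ℂ))⁻¹ else 0 := by
    intro i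
    rw [Polynomial.finset_sum_coeff]
    have hterm : ∀ j : Fin (n + 1), ((c i * d j) •
        (if (i : ℕ) ≤ n - (j : ℕ) then
          C ((Nat.factorial (n - (j : ℕ) - (i : ℕ)) : ℂ))⁻¹ * X ^ (n - (j : ℕ) - (i : ℕ))
        else 0)).coeff m =
        if hI : (i : ℕ) + m ≤ n then
          (if (⟨n - m - (i : ℕ), by omega⟩ : Fin (n + 1)) = j then
            c i * d j * ((Nat.factorial m : ℂ))⁻¹ else 0)
        else 0 := by
      intro j
      have hi := i.isLt
      have hj := j.isLt
      rw [Polynomial.coeff_smul]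
      by_cases hcond : (i : ℕ) ≤ n - (j : ℕ) ∧ n - (j : ℕ) - (i : ℕ) = m
      · rw [if_pos hcond.1, Polynomial.coeff_C_mul, Polynomial.coeff_X_pow,
          if_pos hcond.2.symm, dif_pos (by omega), if_pos (Fin.ext (by simp only; omega)),
          hcond.2, smul_eq_mul]
        ring
      · have hz : ((if (i : ℕ) ≤ n - (j : ℕ) then
            C ((Nat.factorial (n - (j : ℕ) - (i : ℕ)) : ℂ))⁻¹ * X ^ (n - (j : ℕ) - (i : ℕ))
          else 0)).coeff m = 0 := by
          by_cases h1 : (i : ℕ) ≤ n - (j : ℕ)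
          · rw [if_pos h1, Polynomial.coeff_C_mul, Polynomial.coeff_X_pow,
              if_neg (fun hmm => hcond ⟨h1, hmm.symm⟩), mul_zero]
          · rw [if_neg h1, Polynomial.coeff_zero]
        rw [hz, smul_zero]
        by_cases hI : (i : ℕ) + m ≤ n
        · rw [dif_pos hI, if_neg]
          intro hfj
          have hv := congrArg Fin.val hfj
          simp only at hv
          exact hcond ⟨by omega, by omega⟩
        · rw [dif_neg hI]
    rw [Finset.sum_congr rfl fun j _ => hterm j]
    by_cases hI : (i : ℕ) + m ≤ n
    · simp only [dif_pos hI]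
      rw [Finset.sum_ite_eq]
      simp
    · simp only [dif_neg hI]
      simp
  rw [Finset.sum_congr rfl fun i _ => hlc i]
  by_cases hm : m ≤ n
  · rw [if_pos (Finset.mem_range.mpr (by omega))]
    -- turn Fin-sum into range-sum and reflect
    have h1 : (∑ i : Fin (n + 1), if hI : (i : ℕ) + m ≤ n then
        c i * d ⟨n - m - (i : ℕ), by omega⟩ * ((Nat.factorial m : ℂ))⁻¹ else 0) =
        ∑ i ∈ Finset.range (n + 1), (fun i => if hI : i + m ≤ n then
          c ⟨i, by omega⟩ * d ⟨n - m - i, by omega⟩ * ((Nat.factorial m : ℂ))⁻¹ else 0) i := by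
      rw [← Fin.sum_univ_eq_sum_range]
    rw [h1]
    rw [← Finset.sum_subset (Finset.range_subset_range.mpr (by omega : n - m + 1 ≤ n + 1))
      (fun x _ hx => by
        rw [Finset.mem_range, not_lt] at hx
        have : ¬ (x + m ≤ n) := by
          rw [Finset.mem_range] at *
          omega
        exact dif_neg this)]
    rw [← Finset.sum_range_reflect]
    rw [Finset.sum_mul]
    refine Finset.sum_congr rfl fun j hj => ?_
    rw [Finset.mem_range] at hj
    have harg : n - m + 1 - 1 - j = n - m - j := by omega
    rw [harg, dif_pos (by omega : n - m - j + m ≤ n)]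
    have hd2 : (⟨n - m - (n - m - j), by omega⟩ : Fin (n + 1)) = ⟨n - (n - j), by omega⟩ :=
      Fin.mk_eq_mk.mpr (by omega)
    rw [hd2]
  · rw [if_neg (by rw [Finset.mem_range]; omega)]
    refine Finset.sum_eq_zero fun i _ => ?_
    exact dif_neg (by have := i.isLt; omega)
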